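/- Let a+, a-, b+, b- be positive integers with a+*b+ - a-*b- = 1. Set a = 2*a+*a-, b = 2*b+*b-, and c = 2*(b- + a+)*(b+ + a-). Then ab + 1, ac + 1, and bc + 1 are all perfect squares, and the triple (a, b, c) is regular, i.e., P(a,b,c,0) = 0 where P(a,b,c,d) = a^2 + b^2 + c^2 + d^2 - 2ab - 2ac - 2ad - 2bc - 2bd - 2cd - 4abcd - 4. -/
import Mathlib

def P (a b c d : ℤ) : ℤ := a^2 + b^2 + c^2 + d^2 - 2*a*b - 2*a*c - 2*a*d - 2*b*c - 2*b*d - 2*c*d - 4*a*b*c*d - 4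

theorem stmt_14 (ap am bp bm : ℤ) (h1 : 0 < ap) (h2 : 0 < am) (h3 : 0 < bp) (h4 : 0 < bm)
    (h : ap*bp - am*bm = 1) :
    let a := 2*ap*am
    let b := 2*bp*bm
    let c := 2*(bm + ap)*(bp + am)
    IsSquare (a*b + 1) ∧ IsSquare (a*c + 1) ∧ IsSquare (b*c + 1) ∧
    P a b c 0 = 0 := by
  refine ⟨⟨2*am*bm+1, by linear_combination (4*am*bm) * h⟩,
    ⟨2*am*(bm+ap)+1, by linear_combination (4*am*(bm+ap)) * h⟩,
    ⟨2*bm*(bp+am)+1, by linear_combination (4*bm*(bp+am)) * h⟩, ?_⟩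
  unfold P
  linear_combination (4 + 4*ap*bp - 4*am*bm) * h
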